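/- Let K : X × X → ℝ be a symmetric positive semidefinite kernel. Let X^b = (x_1,…,x_n) be points with K(X^b,X^b) invertible and Y^b ∈ ℝ^n, and let X^c be a sub-tuple of X^b with K(X^c,X^c) invertible and Y^c the corresponding sub-vector of Y^b. Define the two interpolants u^b(x) = K(x,X^b)(K(X^b,X^b))^{-1} Y^b and u^c(x) = K(x,X^c)(K(X^c,X^c))^{-1} Y^c, both of which are finite linear combinations of the functions K(·, x_i) with x_i ∈ X^b, and let ‖·‖_K denote the RKHS norm on such combinations. If Y^b ≠ 0, then ρ := ‖u^b − u^c‖²_K / ‖u^b‖²_K = 1 − (Y^{c,ᵀ} (K(X^c,X^c))^{-1} Y^c) / (Y^{b,ᵀ} (K(X^b,X^b))^{-1} Y^b). -/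

import Mathlib

open Matrix

/-- Kernel Flows loss representation. For a symmetric positive semidefinite
kernel `K`, points `X^b = (x_1,…,x_n)` with invertible kernel matrix `K(Xᵇ,Xᵇ)`, values
`Y^b ∈ ℝ^n`, a sub-tuple `X^c = X^b ∘ ι` (with `ι` injective) with invertible kernel matrix
and corresponding values `Y^c = Y^b ∘ ι`, consider the interpolants
`u^b = ∑ i, bcoef i • K (·, x_i)` with `bcoef = K(Xᵇ,Xᵇ)⁻¹ Yᵇ` and
`u^c = ∑ j, ccoef j • K (·, x_{ι j})` with `ccoef = K(Xᶜ,Xᶜ)⁻¹ Yᶜ`. Both are linear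
combinations of the `K(·, x_i)`, `u^b − u^c` having coefficient vector
`e = bcoef − (extension of ccoef by zero)`, so its squared RKHS norm is
`∑ i, ∑ j, e i * e j * K (x_i) (x_j)`. If `Yᵇ ≠ 0`, then
`ρ = ‖u^b − u^c‖²_K / ‖u^b‖²_K = 1 − (Yᶜᵀ K(Xᶜ,Xᶜ)⁻¹ Yᶜ) / (Yᵇᵀ K(Xᵇ,Xᵇ)⁻¹ Yᵇ)`. -/
theorem kernel_flows_rho_representation {X : Type*} (K : X → X → ℝ)
    (hsymm : ∀ x y, K x y = K y x)
    (hpsd : ∀ (p : ℕ) (z : Fin p → X) (c : Fin p → ℝ),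
      0 ≤ ∑ i, ∑ j, c i * c j * K (z i) (z j))
    (n p : ℕ) (xs : Fin n → X) (Yb : Fin n → ℝ)
    (ι : Fin p → Fin n) (hι : Function.Injective ι)
    (Yc : Fin p → ℝ) (hYc : ∀ j, Yc j = Yb (ι j))
    (Kb : Matrix (Fin n) (Fin n) ℝ)
    (hKb : Kb = Matrix.of fun i j => K (xs i) (xs j))
    (hKbinv : IsUnit Kb.det)
    (Kc : Matrix (Fin p) (Fin p) ℝ)
    (hKc : Kc = Matrix.of fun i j => K (xs (ι i)) (xs (ι j)))
    (hKcinv : IsUnit Kc.det)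
    (hYb : Yb ≠ 0)
    (e : Fin n → ℝ)
    (he : ∀ i, e i = (Kb⁻¹ *ᵥ Yb) i - ∑ j, if ι j = i then (Kc⁻¹ *ᵥ Yc) j else 0) :
    (∑ i, ∑ j, e i * e j * K (xs i) (xs j)) / (Yb ⬝ᵥ (Kb⁻¹ *ᵥ Yb))
      = 1 - (Yc ⬝ᵥ (Kc⁻¹ *ᵥ Yc)) / (Yb ⬝ᵥ (Kb⁻¹ *ᵥ Yb)) := by
  set b : Fin n → ℝ := Kb⁻¹ *ᵥ Yb with hb
  set c : Fin p → ℝ := Kc⁻¹ *ᵥ Yc with hc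
  set E : Fin n → ℝ := fun i => ∑ j, if ι j = i then c j else 0 with hE
  have he' : e = b - E := funext fun i => by simpa using he i
  have hKbb : Kb *ᵥ b = Yb := by
    rw [hb, Matrix.mulVec_mulVec, Matrix.mul_nonsing_inv _ hKbinv, Matrix.one_mulVec]
  have hKcc : Kc *ᵥ c = Yc := by
    rw [hc, Matrix.mulVec_mulVec, Matrix.mul_nonsing_inv _ hKcinv, Matrix.one_mulVec]
  -- dot product with the zero-extension E picks out the ι-indexed entries
  have hEdot : ∀ v : Fin n → ℝ, E ⬝ᵥ v = ∑ j, c j * v (ι j) := by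
    intro v
    simp only [dotProduct, hE, Finset.sum_mul, ite_mul, zero_mul]
    rw [Finset.sum_comm]
    refine Finset.sum_congr rfl fun j _ => ?_
    rw [Finset.sum_ite_eq Finset.univ (ι j) (fun i => c j * v i)]
    simp
  -- quadratic form identity
  have hquad : ∀ v : Fin n → ℝ,
      v ⬝ᵥ Kb *ᵥ v = ∑ i, ∑ j, v i * v j * K (xs i) (xs j) := by
    intro v
    simp only [dotProduct, mulVec, hKb, Finset.mul_sum]
    exact Finset.sum_congr rfl fun i _ => Finset.sum_congr rfl fun j _ => by
      simp [Matrix.of_apply]; ring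
  have hsymmKb : ∀ i j, Kb i j = Kb j i := by
    intro i j; rw [hKb]; exact hsymm _ _
  have hKbE : ∀ i', ∑ i, Kb i' i * E i = ∑ j, c j * Kb i' (ι j) := by
    intro i'
    have h := hEdot (fun i => Kb i' i)
    rw [dotProduct] at h
    rw [← h]
    exact Finset.sum_congr rfl fun i _ => mul_comm _ _
  have hKbbpt : ∀ i, ∑ i', Kb i i' * b i' = Yb i := by
    intro i
    have := congrFun hKbb i
    simpa [mulVec, dotProduct] using this
  have hEYb : E ⬝ᵥ Yb = Yc ⬝ᵥ c := by
    rw [hEdot, dotProduct]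
    exact Finset.sum_congr rfl fun j _ => by rw [hYc j]; ring
  have hbKbE : b ⬝ᵥ (Kb *ᵥ E) = Yc ⬝ᵥ c := by
    have h1 : b ⬝ᵥ (Kb *ᵥ E) = ∑ j, c j * ∑ i, Kb (ι j) i * b i := by
      simp only [dotProduct, mulVec]
      calc ∑ i, b i * ∑ x, Kb i x * E x
          = ∑ i, b i * ∑ j, c j * Kb i (ι j) :=
            Finset.sum_congr rfl fun i _ => by rw [hKbE i]
        _ = ∑ i, ∑ j, b i * (c j * Kb i (ι j)) := by simp [Finset.mul_sum]
        _ = ∑ j, ∑ i, b i * (c j * Kb i (ι j)) := Finset.sum_comm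
        _ = ∑ j, c j * ∑ i, Kb (ι j) i * b i := by
            refine Finset.sum_congr rfl fun j _ => ?_
            rw [Finset.mul_sum]
            exact Finset.sum_congr rfl fun i _ => by rw [hsymmKb (ι j) i]; ring
    rw [h1]
    simp only [hKbbpt]
    rw [dotProduct]
    exact Finset.sum_congr rfl fun j _ => by rw [hYc j]; ring
  have hEKbE : E ⬝ᵥ (Kb *ᵥ E) = Yc ⬝ᵥ c := by
    rw [hEdot (Kb *ᵥ E)]
    have h2 : ∀ j, (Kb *ᵥ E) (ι j) = ∑ j', Kc j j' * c j' := by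
      intro j
      have h3 : (Kb *ᵥ E) (ι j) = ∑ i, Kb (ι j) i * E i := by
        simp [mulVec, dotProduct]
      rw [h3, hKbE (ι j)]
      exact Finset.sum_congr rfl fun j' _ => by rw [hKb, hKc]; simp; ring
    simp only [h2]
    have h4 : ∑ j, c j * ∑ j', Kc j j' * c j' = c ⬝ᵥ (Kc *ᵥ c) := by
      simp [dotProduct, mulVec]
    rw [h4, hKcc, dotProduct_comm]
  have hnum : ∑ i, ∑ j, e i * e j * K (xs i) (xs j)
      = Yb ⬝ᵥ b - Yc ⬝ᵥ c := by
    rw [← hquad e, he']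
    have expand : (b - E) ⬝ᵥ Kb *ᵥ (b - E)
        = b ⬝ᵥ (Kb *ᵥ b) - b ⬝ᵥ (Kb *ᵥ E) - E ⬝ᵥ (Kb *ᵥ b) + E ⬝ᵥ (Kb *ᵥ E) := by
      rw [Matrix.mulVec_sub]
      simp [sub_dotProduct, dotProduct_sub]
      ring
    rw [expand, hKbb, hbKbE, hEYb, hEKbE, dotProduct_comm b Yb]
    ring
  -- denominator is nonzero
  have hPS : Kb.PosSemidef := by
    rw [posSemidef_iff_dotProduct_mulVec]
    constructor
    · ext i j
      simp only [conjTranspose_apply, star_trivial, transpose_apply]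
      exact hsymmKb j i
    · intro x
      have h := hpsd n xs x
      rw [← hquad x] at h
      simpa using h
  have hSne : Yb ⬝ᵥ b ≠ 0 := by
    intro h0
    have h1 : star b ⬝ᵥ Kb *ᵥ b = 0 := by
      simpa [hKbb, dotProduct_comm] using h0
    have h2 : Kb *ᵥ b = 0 := (hPS.dotProduct_mulVec_zero_iff b).mp h1
    exact hYb (by rw [← hKbb, h2])
  rw [hnum, sub_div, div_self hSne]
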